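/- Let Σ₃ = Σ₁^{1/2} (Σ₁^{-1/2} Σ₂ Σ₁^{-1/2})^{1/2} Σ₁^{1/2} be the geodesic midpoint of positive definite matrices Σ₁ and Σ₂. Then for every nonzero vector z ∈ ℝ^p, log(zᵀΣ₁⁻¹z) + log(zᵀΣ₂⁻¹z) ≥ 2 log(zᵀΣ₃⁻¹z). -/

import Mathlib

open Matrix

noncomputable def mpow {p : ℕ} (A : Matrix (Fin p) (Fin p) ℝ) (t : ℝ) :
    Matrix (Fin p) (Fin p) ℝ :=
  if h : A.IsHermitian then
    (h.eigenvectorUnitary : Matrix (Fin p) (Fin p) ℝ) *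
      Matrix.diagonal (fun i => h.eigenvalues i ^ t) *
      (star (h.eigenvectorUnitary : Matrix (Fin p) (Fin p) ℝ))
  else A

/-- The geodesic `γ(t) = S1^{1/2} (S1^{-1/2} S2 S1^{-1/2})^t S1^{1/2}` on `S₊₊(p)`. -/
noncomputable def geo {p : ℕ} (A B : Matrix (Fin p) (Fin p) ℝ) (t : ℝ) :
    Matrix (Fin p) (Fin p) ℝ :=
  mpow A (1/2) * mpow (mpow A (-(1/2)) * B * mpow A (-(1/2))) t * mpow A (1/2)

section Aux

variable {p : ℕ}

lemma posdef_conj {A B : Matrix (Fin p) (Fin p) ℝ} (hA : A.PosDef) (hB : IsUnit B.det) :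
    (B * A * Bᴴ).PosDef := by
  refine Matrix.PosDef.of_dotProduct_mulVec_pos ?_ ?_
  · exact isHermitian_mul_mul_conjTranspose B hA.1
  · intro x hx
    have h1 : star x ⬝ᵥ (B * A * Bᴴ) *ᵥ x = star (Bᴴ *ᵥ x) ⬝ᵥ A *ᵥ (Bᴴ *ᵥ x) := by
      rw [star_mulVec, conjTranspose_conjTranspose, ← Matrix.mulVec_mulVec,
        ← Matrix.mulVec_mulVec, dotProduct_mulVec]
    rw [h1]
    refine hA.dotProduct_mulVec_pos (x := Bᴴ *ᵥ x) (fun h => hx ?_)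
    have h2 : Bᴴ⁻¹ *ᵥ (Bᴴ *ᵥ x) = 0 := by rw [h, mulVec_zero]
    rwa [mulVec_mulVec, Matrix.nonsing_inv_mul _ (by simpa using hB), one_mulVec] at h2

lemma star_unitary_mul {A : Matrix (Fin p) (Fin p) ℝ} (h : A.IsHermitian) :
    (star (h.eigenvectorUnitary : Matrix (Fin p) (Fin p) ℝ)) *
      (h.eigenvectorUnitary : Matrix (Fin p) (Fin p) ℝ) = 1 :=
  Matrix.mem_unitaryGroup_iff'.mp h.eigenvectorUnitary.2

lemma unitary_mul_star {A : Matrix (Fin p) (Fin p) ℝ} (h : A.IsHermitian) :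
    (h.eigenvectorUnitary : Matrix (Fin p) (Fin p) ℝ) *
      (star (h.eigenvectorUnitary : Matrix (Fin p) (Fin p) ℝ)) = 1 :=
  Matrix.mem_unitaryGroup_iff.mp h.eigenvectorUnitary.2

lemma mpow_posDef {A : Matrix (Fin p) (Fin p) ℝ} (hA : A.PosDef) (t : ℝ) :
    (mpow A t).PosDef := by
  rw [mpow, dif_pos hA.1]
  have hD : (Matrix.diagonal (fun i => hA.1.eigenvalues i ^ t)).PosDef :=
    Matrix.posDef_diagonal_iff.mpr fun i => Real.rpow_pos_of_pos (hA.eigenvalues_pos i) t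
  have hU : IsUnit ((hA.1.eigenvectorUnitary : Matrix (Fin p) (Fin p) ℝ)).det :=
    (Matrix.isUnit_iff_isUnit_det _).mp
      ⟨⟨_, star (hA.1.eigenvectorUnitary : Matrix (Fin p) (Fin p) ℝ),
        unitary_mul_star hA.1, star_unitary_mul hA.1⟩, rfl⟩
  have := posdef_conj hD hU
  rwa [← Matrix.star_eq_conjTranspose] at this

lemma mpow_add {A : Matrix (Fin p) (Fin p) ℝ} (hA : A.PosDef) (s t : ℝ) :
    mpow A s * mpow A t = mpow A (s + t) := by
  rw [mpow, mpow, mpow, dif_pos hA.1, dif_pos hA.1, dif_pos hA.1]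
  set U : Matrix (Fin p) (Fin p) ℝ := (hA.1.eigenvectorUnitary : Matrix (Fin p) (Fin p) ℝ)
  have hU : star U * U = 1 := star_unitary_mul hA.1
  have key : (U * Matrix.diagonal (fun i => hA.1.eigenvalues i ^ s) * star U) *
      (U * Matrix.diagonal (fun i => hA.1.eigenvalues i ^ t) * star U) =
      U * (Matrix.diagonal (fun i => hA.1.eigenvalues i ^ s) * (star U * U) *
        Matrix.diagonal (fun i => hA.1.eigenvalues i ^ t)) * star U := by
    simp only [Matrix.mul_assoc]
  rw [key, hU, Matrix.mul_one, Matrix.diagonal_mul_diagonal]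
  have heq : (fun i => hA.1.eigenvalues i ^ s * hA.1.eigenvalues i ^ t) =
      fun i => hA.1.eigenvalues i ^ (s + t) := by
    funext i
    rw [← Real.rpow_add (hA.eigenvalues_pos i)]
  rw [heq]

lemma mpow_zero {A : Matrix (Fin p) (Fin p) ℝ} (hA : A.PosDef) : mpow A 0 = 1 := by
  rw [mpow, dif_pos hA.1]
  simp only [Real.rpow_zero, Matrix.diagonal_one, Matrix.mul_one]
  exact unitary_mul_star hA.1

lemma mpow_one {A : Matrix (Fin p) (Fin p) ℝ} (hA : A.PosDef) : mpow A 1 = A := by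
  rw [mpow, dif_pos hA.1]
  simp only [Real.rpow_one]
  have := hA.1.spectral_theorem
  simpa using this.symm

lemma dot_conj {B C : Matrix (Fin p) (Fin p) ℝ} (hB : B.IsHermitian) (z x : Fin p → ℝ) :
    z ⬝ᵥ (B * C * B) *ᵥ x = (B *ᵥ z) ⬝ᵥ C *ᵥ (B *ᵥ x) := by
  have hBt : Bᵀ = B := by
    ext i j; simpa using congrFun (congrFun hB i) j
  rw [← Matrix.mulVec_mulVec, ← Matrix.mulVec_mulVec, dotProduct_mulVec z B,
    ← Matrix.mulVec_transpose, hBt]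

end Aux

theorem log_quadform_midpoint_ineq {p : ℕ} (S1 S2 : Matrix (Fin p) (Fin p) ℝ)
    (h₁ : S1.PosDef) (h₂ : S2.PosDef) (z : Fin p → ℝ) (hz : z ≠ 0) :
    2 * Real.log (z ⬝ᵥ (geo S1 S2 (1/2))⁻¹ *ᵥ z) ≤
      Real.log (z ⬝ᵥ S1⁻¹ *ᵥ z) + Real.log (z ⬝ᵥ S2⁻¹ *ᵥ z) := by
  set R : Matrix (Fin p) (Fin p) ℝ := mpow S1 (1/2) with hRdef
  set Ri : Matrix (Fin p) (Fin p) ℝ := mpow S1 (-(1/2)) with hRidef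
  have hR : R.PosDef := mpow_posDef h₁ _
  have hRi : Ri.PosDef := mpow_posDef h₁ _
  have hRRi : R * Ri = 1 := by
    rw [hRdef, hRidef, mpow_add h₁, show (1/2 + -(1/2) : ℝ) = 0 by norm_num, mpow_zero h₁]
  have hRiR : Ri * R = 1 := by
    rw [hRdef, hRidef, mpow_add h₁, show (-(1/2) + 1/2 : ℝ) = 0 by norm_num, mpow_zero h₁]
  set M : Matrix (Fin p) (Fin p) ℝ := Ri * S2 * Ri with hMdef
  have hM : M.PosDef := by
    have := posdef_conj h₂ (isUnit_iff_ne_zero.mpr hRi.det_pos.ne')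
    rwa [hRi.1.eq] at this
  set N : Matrix (Fin p) (Fin p) ℝ := mpow M (1/2) with hNdef
  have hN : N.PosDef := mpow_posDef hM _
  have hNN : N * N = M := by
    rw [hNdef, mpow_add hM, show (1/2 + 1/2 : ℝ) = 1 by norm_num, mpow_one hM]
  have hNinv : N⁻¹.PosDef := hN.inv
  have hNNinv : N * N⁻¹ = 1 := Matrix.mul_nonsing_inv _ (isUnit_iff_ne_zero.mpr hN.det_pos.ne')
  have hgeo : geo S1 S2 (1/2) = R * N * R := rfl
  -- inverse identifications
  have hG : (geo S1 S2 (1/2))⁻¹ = Ri * N⁻¹ * Ri := by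
    rw [hgeo]
    refine Matrix.inv_eq_right_inv ?_
    calc R * N * R * (Ri * N⁻¹ * Ri)
        = R * (N * ((R * Ri) * N⁻¹)) * Ri := by simp only [Matrix.mul_assoc]
      _ = 1 := by rw [hRRi, Matrix.one_mul, hNNinv, Matrix.mul_one, hRRi]
  have hS1inv : S1⁻¹ = Ri * (1 : Matrix (Fin p) (Fin p) ℝ) * Ri := by
    refine Matrix.inv_eq_right_inv ?_
    rw [Matrix.mul_one]
    calc S1 * (Ri * Ri) = mpow S1 1 * mpow S1 (-(1/2)) * mpow S1 (-(1/2)) := by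
          rw [mpow_one h₁, Matrix.mul_assoc]
      _ = mpow S1 0 := by
          rw [mpow_add h₁, mpow_add h₁]; norm_num
      _ = 1 := mpow_zero h₁
  have hS2inv : S2⁻¹ = Ri * (N⁻¹ * (1 : Matrix (Fin p) (Fin p) ℝ) * N⁻¹) * Ri := by
    refine Matrix.inv_eq_right_inv ?_
    have hS2 : S2 = R * (N * N) * R := by
      rw [hNN, hMdef]
      calc S2 = (R * Ri) * S2 * (Ri * R) := by rw [hRRi, hRiR, Matrix.one_mul, Matrix.mul_one]
        _ = R * (Ri * S2 * Ri) * R := by simp only [Matrix.mul_assoc]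
    rw [hS2, Matrix.mul_one]
    calc R * (N * N) * R * (Ri * (N⁻¹ * N⁻¹) * Ri)
        = R * (N * ((N * ((R * Ri) * N⁻¹)) * N⁻¹)) * Ri := by simp only [Matrix.mul_assoc]
      _ = 1 := by
          rw [hRRi, Matrix.one_mul, hNNinv, Matrix.one_mul, hNNinv, Matrix.mul_one, hRRi]
  -- vectors
  set w : Fin p → ℝ := Ri *ᵥ z with hwdef
  set v : Fin p → ℝ := N⁻¹ *ᵥ w with hvdef
  have hw0 : w ≠ 0 := by
    intro h
    apply hz
    have h2 : R *ᵥ (Ri *ᵥ z) = 0 := by rw [← hwdef, h, mulVec_zero]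
    rwa [mulVec_mulVec, hRRi, one_mulVec] at h2
  have hv0 : v ≠ 0 := by
    intro h
    apply hw0
    have h2 : N *ᵥ (N⁻¹ *ᵥ w) = 0 := by rw [← hvdef, h, mulVec_zero]
    rwa [mulVec_mulVec, hNNinv, one_mulVec] at h2
  -- the three quadratic forms
  have ha : z ⬝ᵥ (geo S1 S2 (1/2))⁻¹ *ᵥ z = w ⬝ᵥ v := by
    rw [hG, dot_conj hRi.1, ← hwdef, ← hvdef]
  have hb : z ⬝ᵥ S1⁻¹ *ᵥ z = w ⬝ᵥ w := by
    rw [hS1inv, dot_conj hRi.1, ← hwdef, one_mulVec]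
  have hc : z ⬝ᵥ S2⁻¹ *ᵥ z = v ⬝ᵥ v := by
    rw [hS2inv, dot_conj hRi.1, ← hwdef, dot_conj hNinv.1, ← hvdef, one_mulVec]
  -- positivity
  have hapos : 0 < w ⬝ᵥ v := by
    have := hNinv.dotProduct_mulVec_pos hw0
    simpa [hvdef] using this
  have hbpos : 0 < w ⬝ᵥ w := by
    obtain ⟨i, hi⟩ := Function.ne_iff.mp hw0
    have : (0:ℝ) < ∑ j, w j * w j :=
      Finset.sum_pos' (fun j _ => mul_self_nonneg (w j))
        ⟨i, Finset.mem_univ i, mul_self_pos.mpr hi⟩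
    simpa [dotProduct] using this
  have hcpos : 0 < v ⬝ᵥ v := by
    obtain ⟨i, hi⟩ := Function.ne_iff.mp hv0
    have : (0:ℝ) < ∑ j, v j * v j :=
      Finset.sum_pos' (fun j _ => mul_self_nonneg (v j))
        ⟨i, Finset.mem_univ i, mul_self_pos.mpr hi⟩
    simpa [dotProduct] using this
  -- Cauchy-Schwarz
  have hCS : (w ⬝ᵥ v) ^ 2 ≤ (w ⬝ᵥ w) * (v ⬝ᵥ v) := by
    have h := Finset.sum_mul_sq_le_sq_mul_sq Finset.univ w v
    simpa [dotProduct, sq] using h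
  rw [ha, hb, hc]
  have h2 : 2 * Real.log (w ⬝ᵥ v) = Real.log ((w ⬝ᵥ v) ^ 2) := by
    rw [Real.log_pow]; push_cast; ring
  rw [h2, ← Real.log_mul hbpos.ne' hcpos.ne']
  exact Real.log_le_log (pow_pos hapos 2) hCS
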